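/- If 𝔣 and 𝔤 are T-linear functionals on E = L^2(T), each dominated in absolute value by a positive multiple (in R(T)) of the R(T)-valued norm ‖·‖_{T,2}, then their Riesz–Kantorovich supremum 𝔣 ∨ 𝔤 is also so dominated: if |𝔣(x)| ≤ k_𝔣‖x‖_{T,2} and |𝔤(x)| ≤ k_𝔤‖x‖_{T,2} for all x, then |(𝔣 ∨ 𝔤)(x)| ≤ (k_𝔣 + k_𝔤)‖x‖_{T,2} for all x ∈ E. -/

import Mathlib

/-!
Common setup.  `E` models the universal completion `E_u` of the `T`-universally
complete Riesz space `L¹(T)`: a Dedekind complete (conditionally complete)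
`f`-algebra whose multiplicative unit `1 = e = Te` is a weak order unit.
`T : E → E` models the strictly positive conditional expectation operator,
`L1 ⊆ E` its natural domain `L¹(T)`, `L2 L1` the space `L²(T)` and `RT T` the
range `R(T)` of `T`.
-/

variable {E : Type*}

/-- The range `R(T)` of the conditional expectation operator. -/
def RT (T : E → E) : Set E := Set.range T

/-- `L²(T) = {f ∈ L¹(T) : f² ∈ L¹(T)}`, the product taken in the `f`-algebra `E_u`. -/
def L2 [Mul E] (L1 : Set E) : Set E := {f | f ∈ L1 ∧ f * f ∈ L1}

variable [CommRing E] [ConditionallyCompleteLattice E]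

/-- `T` is a strictly positive conditional expectation operator on the
`T`-universally complete space `L¹(T)` (modelled by the set `L1` inside the
Dedekind complete `f`-algebra `E`), with `1 = e = Te` a weak order unit. -/
structure IsCondExp (T : E → E) (L1 : Set E) : Prop where
  /-- compatibility of the order with addition -/
  addLe : ∀ a b c : E, a ≤ b → a + c ≤ b + c
  /-- products of positive elements are positive -/
  mulPos : ∀ a b : E, 0 ≤ a → 0 ≤ b → 0 ≤ a * b
  /-- the `f`-algebra property -/
  fAlg : ∀ a b c : E, a ⊓ b = 0 → 0 ≤ c → (c * a) ⊓ b = 0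
  /-- `1 = e` is a weak order unit -/
  weakUnit : ∀ x : E, 0 ≤ x → x ⊓ 1 = 0 → x = 0
  /-- `T` is additive -/
  addT : ∀ a b : E, T (a + b) = T a + T b
  /-- `T` is positive -/
  posT : ∀ a : E, 0 ≤ a → 0 ≤ T a
  /-- `T` is strictly positive -/
  strictT : ∀ a : E, 0 ≤ a → T a = 0 → a = 0
  /-- `T` is a projection -/
  projT : ∀ a : E, T (T a) = T a
  /-- `T` maps the weak order unit `e = 1` to itself -/
  unitT : T 1 = 1
  /-- `T` is an averaging operator: `T(T a · b) = T a · T b` -/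
  avgT : ∀ a b : E, T (T a * b) = T a * T b
  /-- `T` is order continuous -/
  ordContT : ∀ S : Set E, S.Nonempty → DirectedOn (· ≥ ·) S → (∀ x ∈ S, 0 ≤ x) →
      IsGLB S 0 → IsGLB (T '' S) 0
  /-- `L¹(T)` is closed under addition -/
  l1add : ∀ a ∈ L1, ∀ b ∈ L1, a + b ∈ L1
  /-- `L¹(T)` is solid -/
  l1sol : ∀ a ∈ L1, ∀ b : E, |b| ≤ |a| → b ∈ L1
  /-- `R(T) ⊆ L¹(T)` and `T` maps `L¹(T)` into itself -/
  rtL1 : ∀ a : E, T a ∈ L1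
  /-- `L²(T)` is an `R(T)`-module -/
  l2mod : ∀ α ∈ RT T, ∀ x ∈ L2 L1, α * x ∈ L2 L1
  /-- `T`-universal completeness of `L¹(T)` -/
  tuc : ∀ S : Set E, S.Nonempty → (∀ x ∈ S, 0 ≤ x ∧ x ∈ L1) → DirectedOn (· ≤ ·) S →
      BddAbove (T '' S) → BddAbove S ∧ sSup S ∈ L1

/-- `sqrt` is a square-root function on the positive cone of the `f`-algebra. -/
def IsSqrt (sqrt : E → E) : Prop := ∀ a : E, 0 ≤ a → 0 ≤ sqrt a ∧ sqrt a * sqrt a = a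

/-- The `R(T)`-valued norm `‖f‖_{T,2} = (T (f²))^{1/2}` on `L²(T)`. -/
def nrm (T : E → E) (sqrt : E → E) (f : E) : E := sqrt (T (f * f))

/-- A `T`-linear functional on `E = L²(T)`: `R(T)`-valued, additive,
`R(T)`-homogeneous and order bounded.  The set of these is the `T`-dual `E*`. -/
def TLinear (T : E → E) (L1 : Set E) (F : E → E) : Prop :=
  (∀ x ∈ L2 L1, F x ∈ RT T) ∧
  (∀ x ∈ L2 L1, ∀ y ∈ L2 L1, F (x + y) = F x + F y) ∧
  (∀ α ∈ RT T, ∀ x ∈ L2 L1, F (α * x) = α * F x) ∧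
  (∀ x ∈ L2 L1, 0 ≤ x → ∃ b : E, ∀ y ∈ L2 L1, |y| ≤ x → |F y| ≤ b)

/-- `T`-strong boundedness: `|F x| ≤ k ‖x‖_{T,2}` for some `k ∈ R(T)₊`. -/
def StronglyBdd (T : E → E) (L1 : Set E) (sqrt : E → E) (F : E → E) : Prop :=
  ∃ k ∈ RT T, 0 ≤ k ∧ ∀ x ∈ L2 L1, |F x| ≤ k * nrm T sqrt x

/-- Membership in the `T`-strong dual `Ê` of `L²(T)`. -/
def MemEhat (T : E → E) (L1 : Set E) (sqrt : E → E) (F : E → E) : Prop :=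
  TLinear T L1 F ∧ StronglyBdd T L1 sqrt F

/-- The Riesz representation map `Ψ(f)(g) = T (f g)`. -/
def Psi (T : E → E) (f : E) : E → E := fun g => T (f * g)

/-- The Riesz–Kantorovich set `{F y + G z : y, z ∈ L²(T)₊, y + z = x}` whose
supremum is `(F ∨ G)(x)` and whose infimum is `(F ∧ G)(x)`. -/
def RKset (L1 : Set E) (F G : E → E) (x : E) : Set E :=
  {v | ∃ y z : E, y ∈ L2 L1 ∧ z ∈ L2 L1 ∧ 0 ≤ y ∧ 0 ≤ z ∧ y + z = x ∧ v = F y + G z}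

/-- The partial order on functionals: `F ≤ G` iff `F x ≤ G x` for all `x ∈ L²(T)₊`. -/
def leF [Mul E] (L1 : Set E) (F G : E → E) : Prop := ∀ x ∈ L2 L1, 0 ≤ x → F x ≤ G x


section AuxLemmas

variable {E : Type*} [CommRing E] [ConditionallyCompleteLattice E]
variable {T : E → E} {L1 : Set E} {sqrt : E → E}

private theorem aux_cov1 (hT : IsCondExp T L1) : AddLeftMono E :=
  ⟨fun a b c h => by simpa [add_comm] using hT.addLe b c a h⟩

private theorem aux_cov2 (hT : IsCondExp T L1) : AddRightMono E :=
  ⟨fun a b c h => hT.addLe b c a h⟩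

private theorem aux_mulle (hT : IsCondExp T L1) {a b c : E} (hc : 0 ≤ c) (h : a ≤ b) :
    c * a ≤ c * b := by
  haveI := aux_cov1 hT; haveI := aux_cov2 hT
  have h1 := hT.mulPos c (b - a) hc (by rwa [sub_nonneg])
  have h2 : c * b - c * a = c * (b - a) := by ring
  rw [← sub_nonneg, h2]; exact h1

private theorem aux_dpz (hT : IsCondExp T L1) {a b : E} (ha : 0 ≤ a) (hb : 0 ≤ b)
    (h : a ⊓ b = 0) : a * b = 0 := by
  have h1 : (b * a) ⊓ b = 0 := hT.fAlg a b b h hb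
  have h2 : (a * b) ⊓ (b * a) = 0 := hT.fAlg b (b * a) a (by rwa [inf_comm]) ha
  rw [mul_comm b a] at h2
  simpa [inf_idem] using h2

private theorem aux_one_nonneg (hT : IsCondExp T L1) : (0 : E) ≤ 1 := by
  haveI := aux_cov1 hT; haveI := aux_cov2 hT
  have hpn : (1 : E)⁺ * (1 : E)⁻ = 0 :=
    aux_dpz hT (posPart_nonneg _) (negPart_nonneg _) (posPart_inf_negPart_eq_zero _)
  have hd : (1 : E)⁺ - (1 : E)⁻ = 1 := posPart_sub_negPart 1
  have hnn : (0 : E) ≤ (1:E)⁻ * (1:E)⁻ := hT.mulPos _ _ (negPart_nonneg _) (negPart_nonneg _)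
  have key : (1 : E)⁻ = -((1 : E)⁻ * (1 : E)⁻) := by
    linear_combination (-(1 : E)⁻) * hd + hpn
  have h1 : (1 : E)⁻ ≤ 0 := key ▸ neg_nonpos.mpr hnn
  have h0 : (1 : E)⁻ = 0 := le_antisymm h1 (negPart_nonneg _)
  have := posPart_nonneg (1 : E)
  rw [← hd, h0, sub_zero]
  exact this

private theorem aux_nsmul_nonneg (hT : IsCondExp T L1) {b : E} (hb : 0 ≤ b) :
    ∀ n : ℕ, 0 ≤ n • b := by
  haveI := aux_cov1 hT; haveI := aux_cov2 hT
  intro n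
  induction n with
  | zero => simp
  | succ n ih => rw [succ_nsmul]; exact add_nonneg ih hb

private theorem aux_arch (hT : IsCondExp T L1) {b c : E} (h : ∀ n : ℕ, n • b ≤ c) : b ≤ 0 := by
  haveI := aux_cov1 hT; haveI := aux_cov2 hT
  have hne : (Set.range fun n : ℕ => n • b).Nonempty := ⟨0 • b, 0, rfl⟩
  have hbdd : BddAbove (Set.range fun n : ℕ => n • b) := ⟨c, by rintro _ ⟨n, rfl⟩; exact h n⟩
  have hub : sSup (Set.range fun n : ℕ => n • b) ≤ sSup (Set.range fun n : ℕ => n • b) - b := by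
    refine csSup_le hne ?_
    rintro _ ⟨n, rfl⟩
    rw [le_sub_iff_add_le]
    have h1 : (n + 1) • b ≤ sSup (Set.range fun n : ℕ => n • b) := le_csSup hbdd ⟨n + 1, rfl⟩
    rwa [succ_nsmul] at h1
  have h2 := le_sub_iff_add_le.mp hub
  exact (add_le_iff_nonpos_right _).mp h2

private theorem aux_semiprime (hT : IsCondExp T L1) {a : E} (ha : 0 ≤ a) (h : a * a = 0) :
    a = 0 := by
  haveI := aux_cov1 hT; haveI := aux_cov2 hT
  have hb0 : 0 ≤ a ⊓ 1 := le_inf ha (aux_one_nonneg hT)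
  have hba : a ⊓ 1 ≤ a := inf_le_left
  have hbb : (a ⊓ 1) * (a ⊓ 1) = 0 := by
    refine le_antisymm ?_ (hT.mulPos _ _ hb0 hb0)
    calc (a ⊓ 1) * (a ⊓ 1) ≤ (a ⊓ 1) * a := aux_mulle hT hb0 hba
      _ = a * (a ⊓ 1) := mul_comm _ _
      _ ≤ a * a := aux_mulle hT ha hba
      _ = 0 := h
  have hn : ∀ n : ℕ, n • (a ⊓ 1) ≤ 1 := by
    intro n
    have hd0 : 0 ≤ (n • (a ⊓ 1) - 1)⁺ := posPart_nonneg _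
    have hdb : (n • (a ⊓ 1) - 1)⁺ * (a ⊓ 1) = 0 := by
      have h1 : (n • (a ⊓ 1) - 1)⁺ ≤ n • (a ⊓ 1) := by
        rw [posPart_def]
        exact sup_le (sub_le_self _ (aux_one_nonneg hT)) (aux_nsmul_nonneg hT hb0 n)
      have h2 : (n • (a ⊓ 1) - 1)⁺ * (a ⊓ 1) ≤ n • ((a ⊓ 1) * (a ⊓ 1)) := by
        calc (n • (a ⊓ 1) - 1)⁺ * (a ⊓ 1) = (a ⊓ 1) * (n • (a ⊓ 1) - 1)⁺ := mul_comm _ _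
          _ ≤ (a ⊓ 1) * (n • (a ⊓ 1)) := aux_mulle hT hb0 h1
          _ = n • ((a ⊓ 1) * (a ⊓ 1)) := mul_smul_comm n _ _
      rw [hbb, smul_zero] at h2
      exact le_antisymm h2 (hT.mulPos _ _ hd0 hb0)
    have hde : (n • (a ⊓ 1) - 1)⁺ * (n • (a ⊓ 1) - 1)⁻ = 0 :=
      aux_dpz hT hd0 (negPart_nonneg _) (posPart_inf_negPart_eq_zero _)
    have h3 : (n • (a ⊓ 1) - 1)⁺ * (n • (a ⊓ 1)) = 0 := by
      rw [mul_smul_comm, hdb, smul_zero]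
    have h4 := posPart_sub_negPart (n • (a ⊓ 1) - 1)
    have hdeq : (n • (a ⊓ 1) - 1)⁺ = -((n • (a ⊓ 1) - 1)⁺ * (n • (a ⊓ 1) - 1)⁺) := by
      linear_combination (n • (a ⊓ 1) - 1)⁺ * h4 + hde + h3
    have h5 : (n • (a ⊓ 1) - 1)⁺ ≤ 0 := hdeq ▸ neg_nonpos.mpr (hT.mulPos _ _ hd0 hd0)
    have h6 : (n • (a ⊓ 1) - 1)⁺ = 0 := le_antisymm h5 hd0
    have h7 := posPart_eq_zero.mp h6
    rwa [sub_nonpos] at h7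
  have hb00 : a ⊓ 1 = 0 := le_antisymm (aux_arch hT hn) hb0
  exact hT.weakUnit a ha hb00

private theorem aux_sqrt_mono (hT : IsCondExp T L1) {p q : E} (hp : 0 ≤ p) (hq : 0 ≤ q)
    (h : p * p ≤ q * q) : p ≤ q := by
  haveI := aux_cov1 hT; haveI := aux_cov2 hT
  have hc0 : 0 ≤ (p - q)⁺ := posPart_nonneg _
  have hce : (p - q)⁺ * (p - q)⁻ = 0 :=
    aux_dpz hT hc0 (negPart_nonneg _) (posPart_inf_negPart_eq_zero _)
  have h4 := posPart_sub_negPart (p - q)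
  have hcc2 : (p - q)⁺ * (p - q) = (p - q)⁺ * (p - q)⁺ := by
    linear_combination (-(p - q)⁺) * h4 - hce
  have h5 : (p - q)⁺ * (p - q)⁺ * (p + q) = 0 := by
    have hle : (p - q)⁺ * (p * p) ≤ (p - q)⁺ * (q * q) := aux_mulle hT hc0 h
    have h6 : (p - q)⁺ * (p - q)⁺ * (p + q) ≤ 0 := by
      have h7 : (p - q)⁺ * (p * p) - (p - q)⁺ * (q * q) ≤ 0 := sub_nonpos.mpr hle
      calc (p - q)⁺ * (p - q)⁺ * (p + q)
          = (p - q)⁺ * (p * p) - (p - q)⁺ * (q * q) := by linear_combination (-(p + q)) * hcc2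
        _ ≤ 0 := h7
    exact le_antisymm h6 (hT.mulPos _ _ (hT.mulPos _ _ hc0 hc0) (add_nonneg hp hq))
  have h7 : 0 ≤ (p - q)⁺ * (p - q)⁺ * p := hT.mulPos _ _ (hT.mulPos _ _ hc0 hc0) hp
  have h8 : 0 ≤ (p - q)⁺ * (p - q)⁺ * q := hT.mulPos _ _ (hT.mulPos _ _ hc0 hc0) hq
  have h9 : (p - q)⁺ * (p - q)⁺ * p = 0 := by
    refine le_antisymm ?_ h7
    have h10 : (p - q)⁺ * (p - q)⁺ * p = -((p - q)⁺ * (p - q)⁺ * q) := by linear_combination h5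
    rw [h10]; exact neg_nonpos.mpr h8
  have h10 : (p - q)⁺ * (p - q)⁺ * q = 0 := by linear_combination h5 - h9
  have h11 : (p - q)⁺ * (p - q)⁺ * (p - q)⁺ = 0 := by
    linear_combination (-(p - q)⁺) * hcc2 + h9 - h10
  have h12 : ((p - q)⁺ * (p - q)⁺) * ((p - q)⁺ * (p - q)⁺) = 0 := by
    linear_combination ((p - q)⁺) * h11
  have h13 : (p - q)⁺ * (p - q)⁺ = 0 := aux_semiprime hT (hT.mulPos _ _ hc0 hc0) h12
  have h14 : (p - q)⁺ = 0 := aux_semiprime hT hc0 h13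
  have h15 := posPart_eq_zero.mp h14
  rwa [sub_nonpos] at h15

private theorem aux_sq_abs (hT : IsCondExp T L1) (a : E) : |a| * |a| = a * a := by
  haveI := aux_cov1 hT; haveI := aux_cov2 hT
  have hpn : a⁺ * a⁻ = 0 :=
    aux_dpz hT (posPart_nonneg _) (negPart_nonneg _) (posPart_inf_negPart_eq_zero _)
  have hd := posPart_sub_negPart a
  have hs := posPart_add_negPart a
  linear_combination (-(|a| + a⁺ + a⁻)) * hs + (a⁺ - a⁻ + a) * hd + 4 * hpn

private theorem aux_sq_nonneg (hT : IsCondExp T L1) (a : E) : 0 ≤ a * a := by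
  haveI := aux_cov1 hT; haveI := aux_cov2 hT
  rw [← aux_sq_abs hT]
  exact hT.mulPos _ _ (abs_nonneg a) (abs_nonneg a)

private theorem aux_sqle (hT : IsCondExp T L1) {x y : E} (h : |y| ≤ |x|) : y * y ≤ x * x := by
  haveI := aux_cov1 hT; haveI := aux_cov2 hT
  rw [← aux_sq_abs hT y, ← aux_sq_abs hT x]
  calc |y| * |y| ≤ |y| * |x| := aux_mulle hT (abs_nonneg y) h
    _ = |x| * |y| := mul_comm _ _
    _ ≤ |x| * |x| := aux_mulle hT (abs_nonneg x) h

private theorem aux_Tmono (hT : IsCondExp T L1) {a b : E} (h : a ≤ b) : T a ≤ T b := by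
  haveI := aux_cov1 hT; haveI := aux_cov2 hT
  calc T a ≤ T a + T (b - a) := le_add_of_nonneg_right (hT.posT _ (by rwa [sub_nonneg]))
    _ = T (a + (b - a)) := (hT.addT _ _).symm
    _ = T b := by ring_nf

private theorem aux_nrm_nonneg (hT : IsCondExp T L1) (hsqrt : IsSqrt sqrt) (x : E) :
    0 ≤ nrm T sqrt x :=
  (hsqrt _ (hT.posT _ (aux_sq_nonneg hT x))).1

private theorem aux_nrm_mono (hT : IsCondExp T L1) (hsqrt : IsSqrt sqrt) {x y : E}
    (h : |y| ≤ |x|) : nrm T sqrt y ≤ nrm T sqrt x := by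
  obtain ⟨hp0, hp⟩ := hsqrt _ (hT.posT _ (aux_sq_nonneg hT y))
  obtain ⟨hq0, hq⟩ := hsqrt _ (hT.posT _ (aux_sq_nonneg hT x))
  simp only [nrm]
  exact aux_sqrt_mono hT hp0 hq0 (by rw [hp, hq]; exact aux_Tmono hT (aux_sqle hT h))

private theorem aux_sol2 (hT : IsCondExp T L1) {x y : E} (hx : x ∈ L2 L1) (h : |y| ≤ |x|) :
    y ∈ L2 L1 := by
  haveI := aux_cov1 hT; haveI := aux_cov2 hT
  refine ⟨hT.l1sol x hx.1 y h, ?_⟩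
  apply hT.l1sol (x * x) hx.2 (y * y)
  rw [abs_of_nonneg (aux_sq_nonneg hT y), abs_of_nonneg (aux_sq_nonneg hT x)]
  exact aux_sqle hT h

private theorem aux_zero_L2 (hT : IsCondExp T L1) : (0 : E) ∈ L2 L1 := by
  have h : T 0 = T 0 + T 0 := by have h := hT.addT 0 0; rwa [add_zero] at h
  have h0 : T 0 = 0 := right_eq_add.mp h
  have h1 := hT.rtL1 0
  rw [h0] at h1
  exact ⟨h1, by rwa [mul_zero]⟩

private theorem aux_tlin_zero {F : E → E} (hF : TLinear T L1 F) (h0 : (0 : E) ∈ L2 L1) :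
    F 0 = 0 := by
  have h : F 0 = F 0 + F 0 := by have h := hF.2.1 0 h0 0 h0; rwa [add_zero] at h
  exact right_eq_add.mp h

end AuxLemmas

/-- If `|F x| ≤ k_F ‖x‖_{T,2}` and `|G x| ≤ k_G ‖x‖_{T,2}` for all
`x`, then the Riesz–Kantorovich supremum `s = F ∨ G` satisfies
`|s x| ≤ (k_F + k_G) ‖x‖_{T,2}` for all `x ∈ E = L²(T)`. -/
theorem stmt4 (T : E → E) (L1 : Set E) (hT : IsCondExp T L1)
    (sqrt : E → E) (hsqrt : IsSqrt sqrt)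
    (F G s : E → E) (hF : TLinear T L1 F) (hG : TLinear T L1 G) (hs : TLinear T L1 s)
    (kF kG : E) (hkF : kF ∈ RT T) (hkF0 : 0 ≤ kF) (hkG : kG ∈ RT T) (hkG0 : 0 ≤ kG)
    (hFb : ∀ x ∈ L2 L1, |F x| ≤ kF * nrm T sqrt x)
    (hGb : ∀ x ∈ L2 L1, |G x| ≤ kG * nrm T sqrt x)
    (hsup : ∀ x ∈ L2 L1, 0 ≤ x → IsLUB (RKset L1 F G x) (s x)) :
    ∀ x ∈ L2 L1, |s x| ≤ (kF + kG) * nrm T sqrt x := by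
  haveI := aux_cov1 hT; haveI := aux_cov2 hT
  intro x hx
  set N := nrm T sqrt x with hN
  have h0L2 : (0 : E) ∈ L2 L1 := aux_zero_L2 hT
  have hF0 : F 0 = 0 := aux_tlin_zero hF h0L2
  have habs : ∀ y : E, 0 ≤ y → y ≤ |x| → |y| ≤ |x| := fun y hy h => by rwa [abs_of_nonneg hy]
  have hxple : x⁺ ≤ |x| := by rw [posPart_def]; exact sup_le (le_abs_self x) (abs_nonneg x)
  have hxmle : x⁻ ≤ |x| := by rw [negPart_def]; exact sup_le (neg_le_abs x) (abs_nonneg x)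
  have hxp : x⁺ ∈ L2 L1 := aux_sol2 hT hx (habs _ (posPart_nonneg x) hxple)
  have hxm : x⁻ ∈ L2 L1 := aux_sol2 hT hx (habs _ (negPart_nonneg x) hxmle)
  have key : ∀ p q : E, p ∈ L2 L1 → q ∈ L2 L1 → 0 ≤ p → 0 ≤ q → p ≤ |x| → q ≤ |x| →
      s p ≤ (kF + kG) * N + G q := by
    intro p q hpL hqL hp0 hq0 hple hqle
    refine (hsup p hpL hp0).2 ?_
    rintro v ⟨y, z, hyL, hzL, hy0, hz0, hyz, rfl⟩
    have hyp : y ≤ p := by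
      calc y ≤ y + z := le_add_of_nonneg_right hz0
        _ = p := hyz
    have hzp : z ≤ p := by
      calc z ≤ y + z := le_add_of_nonneg_left hy0
        _ = p := hyz
    have hyabs : |y| ≤ |x| := habs y hy0 (hyp.trans hple)
    have hzq_abs : |z - q| ≤ |x| := by
      rw [abs_le']
      constructor
      · calc z - q ≤ z := sub_le_self z hq0
          _ ≤ |x| := hzp.trans hple
      · calc -(z - q) = q - z := by ring
          _ ≤ q := sub_le_self q hz0
          _ ≤ |x| := hqle
    have hzqL : z - q ∈ L2 L1 := aux_sol2 hT hx hzq_abs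
    have hGz : G z = G (z - q) + G q := by
      have h := hG.2.1 (z - q) hzqL q hqL
      rwa [sub_add_cancel] at h
    have hFy : F y ≤ kF * N :=
      le_trans (le_abs_self _) (le_trans (hFb y hyL) (aux_mulle hT hkF0 (aux_nrm_mono hT hsqrt hyabs)))
    have hGzq : G (z - q) ≤ kG * N :=
      le_trans (le_abs_self _) (le_trans (hGb _ hzqL) (aux_mulle hT hkG0 (aux_nrm_mono hT hsqrt hzq_abs)))
    calc F y + G z = (F y + G (z - q)) + G q := by rw [hGz]; ring
      _ ≤ (kF * N + kG * N) + G q := add_le_add (add_le_add hFy hGzq) le_rfl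
      _ = (kF + kG) * N + G q := by ring
  have hsGp : ∀ p : E, p ∈ L2 L1 → 0 ≤ p → G p ≤ s p := by
    intro p hpL hp0
    have hmem : G p ∈ RKset L1 F G p :=
      ⟨0, p, h0L2, hpL, le_refl 0, hp0, zero_add p, by rw [hF0, zero_add]⟩
    exact (hsup p hpL hp0).1 hmem
  have hxx : x + x⁻ = x⁺ := by linear_combination (-1 : E) * posPart_sub_negPart x
  have hdec : s x⁺ = s x + s x⁻ := by
    have h := hs.2.1 x hx x⁻ hxm
    rwa [hxx] at h
  have h3 : s x = s x⁺ - s x⁻ := eq_sub_of_add_eq hdec.symm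
  have hupper : s x ≤ (kF + kG) * N := by
    have h1 := key x⁺ x⁻ hxp hxm (posPart_nonneg x) (negPart_nonneg x) hxple hxmle
    have h2 := hsGp x⁻ hxm (negPart_nonneg x)
    rw [h3]
    calc s x⁺ - s x⁻ ≤ ((kF + kG) * N + G x⁻) - s x⁻ := sub_le_sub_right h1 _
      _ ≤ ((kF + kG) * N + G x⁻) - G x⁻ := sub_le_sub_left h2 _
      _ = (kF + kG) * N := by ring
  have hlower : -(s x) ≤ (kF + kG) * N := by
    have h1 := key x⁻ x⁺ hxm hxp (negPart_nonneg x) (posPart_nonneg x) hxmle hxple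
    have h2 := hsGp x⁺ hxp (posPart_nonneg x)
    have h4 : -(s x) = s x⁻ - s x⁺ := by rw [h3]; ring
    rw [h4]
    calc s x⁻ - s x⁺ ≤ ((kF + kG) * N + G x⁺) - s x⁺ := sub_le_sub_right h1 _
      _ ≤ ((kF + kG) * N + G x⁺) - G x⁺ := sub_le_sub_left h2 _
      _ = (kF + kG) * N := by ring
  rw [abs_le']
  exact ⟨hupper, hlower⟩
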